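/- Let w be a permutation of {1,…,n} and let i, j ∈ {1,…,n} with i ≥ j. Then in ℚ[t] one has f_{i,j}(w) = Σ_{k=j}^{i} (−1)^{i−k} · e_{i−k}(w(j+1),…,w(i)) · t^{i−k} · b_{k,j}((w(1)−1)t, (w(2)−1)t, …, (w(j)−1)t, t), where e_m denotes the m-th elementary symmetric polynomial in the listed rational numbers (with e_0 = 1) and b_{k,j}((w(1)−1)t,…,(w(j)−1)t,t) is the result of substituting u_r = (w(r)−1)t for 1 ≤ r ≤ j into b_{k,j}. -/

import Mathlib

/-- The variable `x_k` (for `1 ≤ k ≤ n`) in `ℚ[x_1,…,x_n,t]`, realized as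
`MvPolynomial (Fin (n+1)) ℚ` where the variable of index `0` is `t`. -/
noncomputable def xv (n k : ℕ) : MvPolynomial (Fin (n + 1)) ℚ :=
  if h : k ≤ n then MvPolynomial.X ⟨k, Nat.lt_succ_of_le h⟩ else 0

/-- The variable `t` in `ℚ[x_1,…,x_n,t]` (also playing the role of `t` in `ℚ[u_1,…,u_n,t]`). -/
noncomputable def tv (n : ℕ) : MvPolynomial (Fin (n + 1)) ℚ :=
  MvPolynomial.X 0

/-- `p_i := Σ_{k=1}^{i} (x_k − k·t)`, with `p_0 = 0`. -/
noncomputable def pp (n i : ℕ) : MvPolynomial (Fin (n + 1)) ℚ :=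
  ∑ k ∈ Finset.Icc 1 i, (xv n k - (k : MvPolynomial (Fin (n + 1)) ℚ) * tv n)

/-- The polynomials `f_{i,j}`: `f_{j,j} = p_j`, `f_{i,0} = 0`, and
`f_{i,j} = f_{i−1,j−1} + (x_j − x_i − t)·f_{i−1,j}` for `i > j ≥ 1`. -/
noncomputable def ff (n : ℕ) : ℕ → ℕ → MvPolynomial (Fin (n + 1)) ℚ
  | _, 0 => 0
  | 0, _ + 1 => 0
  | i + 1, j + 1 =>
    if i + 1 = j + 1 then pp n (j + 1)
    else ff n i j + (xv n (j + 1) - xv n (i + 1) - tv n) * ff n i (j + 1)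

/-- The `ℚ`-algebra homomorphism `ℚ[x_1,…,x_n,t] → ℚ[t]` sending `x_r ↦ w(r)·t` and
`t ↦ t`; applied to `f_{i,j}` it yields `f_{i,j}(w)`. -/
noncomputable def evf (n : ℕ) (w : ℕ → ℕ) : MvPolynomial (Fin (n + 1)) ℚ →ₐ[ℚ] Polynomial ℚ :=
  MvPolynomial.aeval fun v : Fin (n + 1) =>
    if (v : ℕ) = 0 then Polynomial.X else Polynomial.C ((w (v : ℕ) : ℚ)) * Polynomial.X

/-- `b_{j,j} := Σ_{k=1}^{j} (u_k − (k−1)·t)`, in `ℚ[u_1,…,u_n,t]`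
(realized as `MvPolynomial (Fin (n+1)) ℚ` with `u_k` the variable of index `k` and `t`
the variable of index `0`). -/
noncomputable def bbase (n j : ℕ) : MvPolynomial (Fin (n + 1)) ℚ :=
  ∑ r ∈ Finset.Icc 1 j, (xv n r - ((r : MvPolynomial (Fin (n + 1)) ℚ) - 1) * tv n)

/-- The polynomials `b_{k,j}`: `b_{j,j}` as above, `b_{k,0} = 0`, and
`b_{k+1,j} = b_{k,j−1} + u_j·b_{k,j} − (u_j + t)·b_{k−1,j−1}` for `k ≥ j`. -/
noncomputable def bb (n : ℕ) : ℕ → ℕ → MvPolynomial (Fin (n + 1)) ℚ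
  | _, 0 => 0
  | 0, _ + 1 => 0
  | 1, j + 1 => if 1 = j + 1 then bbase n (j + 1) else 0
  | k + 2, j + 1 =>
    if k + 2 = j + 1 then bbase n (j + 1)
    else if k + 2 < j + 1 then 0
    else bb n (k + 1) j + xv n (j + 1) * bb n (k + 1) (j + 1)
      - (xv n (j + 1) + tv n) * bb n k j

/-- The `ℚ`-algebra homomorphism `ℚ[u_1,…,u_n,t] → ℚ[t]` substituting
`u_r ↦ (w(r)−1)·t` and `t ↦ t`. -/
noncomputable def evb (n : ℕ) (w : ℕ → ℕ) : MvPolynomial (Fin (n + 1)) ℚ →ₐ[ℚ] Polynomial ℚ :=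
  MvPolynomial.aeval fun v : Fin (n + 1) =>
    if (v : ℕ) = 0 then Polynomial.X else Polynomial.C ((w (v : ℕ) : ℚ) - 1) * Polynomial.X

/-- The `m`-th elementary symmetric polynomial of the rational numbers `w(q)`, `q ∈ s`
(with `e_0 = 1`). -/
def esym (s : Finset ℕ) (w : ℕ → ℕ) (m : ℕ) : ℚ :=
  ∑ T ∈ Finset.powersetCard m s, ∏ q ∈ T, (w q : ℚ)
open Finset Polynomial

lemma esym_zero (s : Finset ℕ) (w : ℕ → ℕ) : esym s w 0 = 1 := by
  simp [esym]

lemma esym_of_card_lt {s : Finset ℕ} {m : ℕ} (w : ℕ → ℕ) (h : s.card < m) :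
    esym s w m = 0 := by
  simp [esym, Finset.powersetCard_eq_empty.2 h]

lemma esym_insert {a : ℕ} {s : Finset ℕ} (ha : a ∉ s) (w : ℕ → ℕ) (m : ℕ) :
    esym (insert a s) w (m + 1) = esym s w (m + 1) + (w a : ℚ) * esym s w m := by
  classical
  rw [esym, Finset.powersetCard_succ_insert ha, Finset.sum_union, Finset.sum_image]
  · rw [esym, esym, Finset.mul_sum]
    congr 1
    refine Finset.sum_congr rfl fun T hT => ?_
    have haT : a ∉ T := fun h => ha ((Finset.mem_powersetCard.1 hT).1 h)
    rw [Finset.prod_insert haT]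
  · intro T hT T' hT' h
    have haT : a ∉ T := fun h => ha ((Finset.mem_powersetCard.1 hT).1 h)
    have haT' : a ∉ T' := fun h => ha ((Finset.mem_powersetCard.1 hT').1 h)
    rw [← Finset.erase_insert haT, ← Finset.erase_insert haT', h]
  · rw [Finset.disjoint_right]
    intro T hT hT2
    obtain ⟨T', hT', rfl⟩ := Finset.mem_image.1 hT
    exact ha ((Finset.mem_powersetCard.1 hT2).1 (Finset.mem_insert_self a T'))

lemma evf_tv (n : ℕ) (w : ℕ → ℕ) : evf n w (tv n) = Polynomial.X := by
  simp [evf, tv]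

lemma evb_tv (n : ℕ) (w : ℕ → ℕ) : evb n w (tv n) = Polynomial.X := by
  simp [evb, tv]

lemma evf_xv (n : ℕ) (w : ℕ → ℕ) {k : ℕ} (h1 : 1 ≤ k) (h2 : k ≤ n) :
    evf n w (xv n k) = Polynomial.C ((w k : ℚ)) * Polynomial.X := by
  simp only [evf, xv, dif_pos h2, MvPolynomial.aeval_X]
  rw [if_neg (by omega)]

lemma evb_xv (n : ℕ) (w : ℕ → ℕ) {k : ℕ} (h1 : 1 ≤ k) (h2 : k ≤ n) :
    evb n w (xv n k) = Polynomial.C ((w k : ℚ) - 1) * Polynomial.X := by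
  simp only [evb, xv, dif_pos h2, MvPolynomial.aeval_X]
  rw [if_neg (by omega)]

lemma bb_diag (n j : ℕ) (hj : 1 ≤ j) : bb n j j = bbase n j := by
  match j, hj with
  | 1, _ => simp [bb]
  | (k+2), _ => simp [bb]

lemma evf_pp_eq (n : ℕ) (w : ℕ → ℕ) {j : ℕ} (hj : j ≤ n) :
    evf n w (pp n j) = evb n w (bbase n j) := by
  rw [pp, bbase, map_sum, map_sum]
  refine Finset.sum_congr rfl fun r hr => ?_
  obtain ⟨hr1, hr2⟩ := Finset.mem_Icc.1 hr
  rw [map_sub, map_sub, map_mul, map_mul, evf_xv n w hr1 (hr2.trans hj),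
    evb_xv n w hr1 (hr2.trans hj), evf_tv, evb_tv]
  simp only [map_natCast, map_sub, map_one, map_mul]
  ring
lemma bb_zero (n k : ℕ) : bb n k 0 = 0 := by
  cases k with
  | zero => rfl
  | succ m => cases m with
    | zero => rfl
    | succ m' => rfl

lemma ff_zero (n i : ℕ) : ff n i 0 = 0 := by
  cases i <;> rfl

lemma bb_rec (n k j : ℕ) (hjk : j ≤ k) :
    bb n (k+2) (j+1) = bb n (k+1) j + xv n (j+1) * bb n (k+1) (j+1)
      - (xv n (j+1) + tv n) * bb n k j := by
  rw [bb, if_neg (by omega), if_neg (by omega)]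

lemma Bv_rec (n : ℕ) (w : ℕ → ℕ) {k j : ℕ} (hjk : j + 1 ≤ k) (hn : j + 1 ≤ n) :
    evb n w (bb n (k+1) (j+1)) = evb n w (bb n k j)
      + Polynomial.C ((w (j+1) : ℚ) - 1) * Polynomial.X * evb n w (bb n k (j+1))
      - Polynomial.C ((w (j+1) : ℚ)) * Polynomial.X * evb n w (bb n (k-1) j) := by
  obtain ⟨km, rfl⟩ : ∃ km, k = km + 1 := ⟨k - 1, by omega⟩
  rw [bb_rec n km j (by omega), map_sub, map_add, map_mul, map_mul, map_add,
    evb_xv n w (by omega) hn, evb_tv]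
  simp only [map_sub, map_one, Nat.add_sub_cancel]
  ring
lemma esym_card (a b m : ℕ) (w : ℕ → ℕ) (h : b + 1 - a < m) :
    esym (Finset.Icc a b) w m = 0 :=
  esym_of_card_lt w (by rwa [Nat.card_Icc])

lemma Icc_split_top {a b : ℕ} (h : a ≤ b + 1) :
    Finset.Icc a (b + 1) = insert (b + 1) (Finset.Icc a b) := by
  ext x; simp only [Finset.mem_Icc, Finset.mem_insert]; omega

lemma Icc_split_bot {a b : ℕ} (h : a ≤ b) :
    Finset.Icc a b = insert a (Finset.Icc (a + 1) b) := by
  ext x; simp only [Finset.mem_Icc, Finset.mem_insert]; omega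

lemma sum_split_top {M : Type*} [AddCommMonoid M] {a b : ℕ} (h : a ≤ b + 1) (f : ℕ → M) :
    ∑ k ∈ Finset.Icc a (b + 1), f k = (∑ k ∈ Finset.Icc a b, f k) + f (b + 1) := by
  rw [Icc_split_top h, Finset.sum_insert (by simp), add_comm]

lemma sum_shift {M : Type*} [AddCommMonoid M] (a b : ℕ) (f : ℕ → M) :
    ∑ k ∈ Finset.Icc (a + 1) (b + 1), f k = ∑ k ∈ Finset.Icc a b, f (k + 1) := by
  rw [← Finset.map_add_right_Icc, Finset.sum_map]
  simp [addRightEmbedding_apply]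
/-- Summand of the right-hand side sums. -/
noncomputable def trm (n : ℕ) (w : ℕ → ℕ) (s : Finset ℕ) (i j k : ℕ) : Polynomial ℚ :=
  (-1 : Polynomial ℚ) ^ (i - k) * Polynomial.C (esym s w (i - k)) *
    Polynomial.X ^ (i - k) * evb n w (bb n k j)

/-- Variant with shifted `bb` index. -/
noncomputable def trs (n : ℕ) (w : ℕ → ℕ) (s : Finset ℕ) (i j k : ℕ) : Polynomial ℚ :=
  (-1 : Polynomial ℚ) ^ (i - k) * Polynomial.C (esym s w (i - k)) *
    Polynomial.X ^ (i - k) * evb n w (bb n (k - 1) j)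

/-- The right-hand side of the theorem. -/
noncomputable def Sv (n : ℕ) (w : ℕ → ℕ) (i j : ℕ) : Polynomial ℚ :=
  ∑ k ∈ Finset.Icc j i, trm n w (Finset.Icc (j + 1) i) i j k

lemma Sv_zeroj (n : ℕ) (w : ℕ → ℕ) (i : ℕ) : Sv n w i 0 = 0 := by
  simp [Sv, trm, bb_zero]

lemma Sv_diag (n : ℕ) (w : ℕ → ℕ) {j : ℕ} (hj : 1 ≤ j) :
    Sv n w j j = evb n w (bbase n j) := by
  rw [Sv, Finset.Icc_self, Finset.sum_singleton]
  simp [trm, esym_zero, bb_diag n j hj]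
lemma key (n : ℕ) (w : ℕ → ℕ) (im jm : ℕ) (hji : jm ≤ im) (hn : jm + 1 ≤ n) :
    Sv n w (im + 1 + 1) (jm + 1) =
      Sv n w (im + 1) jm +
        (Polynomial.C ((w (jm + 1) : ℚ)) - Polynomial.C ((w (im + 1 + 1) : ℚ)) - 1) *
          Polynomial.X * Sv n w (im + 1) (jm + 1) := by
  classical
  set E : Finset ℕ := Finset.Icc (jm + 1 + 1) (im + 1) with hE
  -- elementary symmetric function recursions
  have heA : ∀ m, esym (Finset.Icc (jm + 1 + 1) (im + 1 + 1)) w (m + 1)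
      = esym E w (m + 1) + (w (im + 1 + 1) : ℚ) * esym E w m := by
    intro m
    rw [show Finset.Icc (jm + 1 + 1) (im + 1 + 1) = insert (im + 1 + 1) E from
      Icc_split_top (by omega), esym_insert (by simp [hE])]
  have heB : ∀ m, esym (Finset.Icc (jm + 1) (im + 1)) w (m + 1)
      = esym E w (m + 1) + (w (jm + 1) : ℚ) * esym E w m := by
    intro m
    rw [show Finset.Icc (jm + 1) (im + 1) = insert (jm + 1) E from
      Icc_split_bot (by omega), esym_insert (by simp [hE])]
  have hetop : ∀ m, im - jm < m → esym E w m = 0 := by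
    intro m hm
    exact esym_card _ _ _ _ (by omega)
  -- the A sum
  set A : Polynomial ℚ := ∑ k ∈ Finset.Icc (jm + 1) (im + 1),
      trm n w E (im + 1) (jm + 1) k with hA
  -- Step I : LHS = T1 - C(w i) X A
  have hL1 : Sv n w (im + 1 + 1) (jm + 1)
      = (∑ k ∈ Finset.Icc (jm + 1) (im + 1 + 1), trm n w E (im + 1 + 1) (jm + 1) k)
        + (-(Polynomial.C ((w (im + 1 + 1) : ℚ)) * Polynomial.X)) * A := by
    rw [Sv, sum_split_top (by omega)]
    have htop : trm n w (Finset.Icc (jm + 1 + 1) (im + 1 + 1)) (im + 1 + 1) (jm + 1) (im + 1 + 1)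
        = evb n w (bb n (im + 1 + 1) (jm + 1)) := by
      simp [trm, esym_zero]
    have hmid : ∀ k ∈ Finset.Icc (jm + 1) (im + 1),
        trm n w (Finset.Icc (jm + 1 + 1) (im + 1 + 1)) (im + 1 + 1) (jm + 1) k
        = trm n w E (im + 1 + 1) (jm + 1) k
          + (-(Polynomial.C ((w (im + 1 + 1) : ℚ)) * Polynomial.X)) *
              trm n w E (im + 1) (jm + 1) k := by
      intro k hk
      rw [Finset.mem_Icc] at hk
      have h1 : im + 1 + 1 - k = (im + 1 - k) + 1 := by omega
      rw [trm, trm, trm, h1, heA (im + 1 - k)]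
      simp only [map_add, map_mul, pow_succ]
      ring
    rw [Finset.sum_congr rfl hmid, Finset.sum_add_distrib, ← Finset.mul_sum, htop, ← hA]
    have hback : ∑ k ∈ Finset.Icc (jm + 1) (im + 1 + 1), trm n w E (im + 1 + 1) (jm + 1) k
        = (∑ k ∈ Finset.Icc (jm + 1) (im + 1), trm n w E (im + 1 + 1) (jm + 1) k)
          + evb n w (bb n (im + 1 + 1) (jm + 1)) := by
      rw [sum_split_top (by omega)]
      rw [add_right_inj]
      simp [trm, esym_zero]
    rw [hback]
    ring
  -- Step II : T1 with bottom term dropped and index shifted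
  have hT1 : ∑ k ∈ Finset.Icc (jm + 1) (im + 1 + 1), trm n w E (im + 1 + 1) (jm + 1) k
      = ∑ k ∈ Finset.Icc (jm + 1) (im + 1), trm n w E (im + 1 + 1) (jm + 1) (k + 1) := by
    rw [show Finset.Icc (jm + 1) (im + 1 + 1)
        = insert (jm + 1) (Finset.Icc (jm + 1 + 1) (im + 1 + 1)) from Icc_split_bot (by omega),
      Finset.sum_insert (by simp), sum_shift]
    have hz : esym E w (im + 1 + 1 - (jm + 1)) = 0 := hetop _ (by omega)
    have hz' : esym E w (im + 1 - jm) = 0 := hetop _ (by omega)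
    simp [trm, hz, hz']
  -- Step III : apply the b-recursion termwise
  have hT2 : ∀ k ∈ Finset.Icc (jm + 1) (im + 1),
      trm n w E (im + 1 + 1) (jm + 1) (k + 1)
      = trm n w E (im + 1) jm k
        + ((Polynomial.C ((w (jm + 1) : ℚ)) - 1) * Polynomial.X) * trm n w E (im + 1) (jm + 1) k
        - (Polynomial.C ((w (jm + 1) : ℚ)) * Polynomial.X) * trs n w E (im + 1) jm k := by
    intro k hk
    rw [Finset.mem_Icc] at hk
    have h2 : im + 1 + 1 - (k + 1) = im + 1 - k := by omega
    rw [trm, trm, trm, trs, h2, Bv_rec n w (show jm + 1 ≤ k by omega) hn]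
    simp only [map_sub, map_one]
    ring
  -- Step IV : the shifted trs sum equals the Q sum
  have hQ : ∑ k ∈ Finset.Icc (jm + 1) (im + 1), trs n w E (im + 1) jm k
      = ∑ k ∈ Finset.Icc jm im, trm n w E im jm k := by
    rw [show Finset.Icc (jm + 1) (im + 1) = Finset.Icc (jm + 1) (im + 1) from rfl, sum_shift]
    refine Finset.sum_congr rfl fun k hk => ?_
    rw [Finset.mem_Icc] at hk
    have h3 : im + 1 - (k + 1) = im - k := by omega
    rw [trs, trm, h3, Nat.add_sub_cancel]
  -- Step V : extending the d-sum down to jm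
  have hD : ∑ k ∈ Finset.Icc jm (im + 1), trm n w E (im + 1) jm k
      = ∑ k ∈ Finset.Icc (jm + 1) (im + 1), trm n w E (im + 1) jm k := by
    rw [show Finset.Icc jm (im + 1) = insert jm (Finset.Icc (jm + 1) (im + 1)) from
      Icc_split_bot (by omega), Finset.sum_insert (by simp)]
    have hz : esym E w (im + 1 - jm) = 0 := hetop _ (by omega)
    simp [trm, hz]
  -- Step VI : the Dfull decomposition
  have hDfull : Sv n w (im + 1) jm
      = (∑ k ∈ Finset.Icc jm (im + 1), trm n w E (im + 1) jm k)
        - Polynomial.C ((w (jm + 1) : ℚ)) * Polynomial.X *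
            ∑ k ∈ Finset.Icc jm im, trm n w E im jm k := by
    rw [Sv, sum_split_top (by omega)]
    have htop : trm n w (Finset.Icc (jm + 1) (im + 1)) (im + 1) jm (im + 1)
        = evb n w (bb n (im + 1) jm) := by simp [trm, esym_zero]
    have hmid : ∀ k ∈ Finset.Icc jm im,
        trm n w (Finset.Icc (jm + 1) (im + 1)) (im + 1) jm k
        = trm n w E (im + 1) jm k
          + (-(Polynomial.C ((w (jm + 1) : ℚ)) * Polynomial.X)) * trm n w E im jm k := by
      intro k hk
      rw [Finset.mem_Icc] at hk
      have h4 : im + 1 - k = (im - k) + 1 := by omega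
      rw [trm, trm, trm, h4, heB (im - k)]
      simp only [map_add, map_mul, pow_succ]
      ring
    rw [Finset.sum_congr rfl hmid, Finset.sum_add_distrib, ← Finset.mul_sum, htop]
    have hback : ∑ k ∈ Finset.Icc jm (im + 1), trm n w E (im + 1) jm k
        = (∑ k ∈ Finset.Icc jm im, trm n w E (im + 1) jm k) + evb n w (bb n (im + 1) jm) := by
      rw [sum_split_top (by omega)]
      congr 1
      simp [trm, esym_zero]
    rw [hback]
    ring
  -- Assemble
  rw [hL1, hT1, Finset.sum_congr rfl hT2]
  simp only [Finset.sum_sub_distrib, Finset.sum_add_distrib, ← Finset.mul_sum]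
  rw [hQ, ← hD, hDfull]
  have hSvA : Sv n w (im + 1) (jm + 1) = A := by rw [Sv, hA, hE]
  rw [hSvA]
  ring
lemma main_ind (n : ℕ) (w : ℕ → ℕ) :
    ∀ i j, 1 ≤ j → j ≤ i → i ≤ n → evf n w (ff n i j) = Sv n w i j := by
  intro i
  induction i with
  | zero => intro j h1 h2 h3; omega
  | succ I IH =>
    intro j hj hji hin
    obtain ⟨J, rfl⟩ : ∃ J, j = J + 1 := ⟨j - 1, by omega⟩
    by_cases hEq : I + 1 = J + 1
    · obtain rfl : J = I := by omega
      rw [show ff n (J + 1) (J + 1) = pp n (J + 1) from by rw [ff, if_pos rfl],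
        evf_pp_eq n w (show J + 1 ≤ n by omega), Sv_diag n w (by omega)]
    · have hlt : J + 1 ≤ I := by omega
      rw [show ff n (I + 1) (J + 1)
          = ff n I J + (xv n (J + 1) - xv n (I + 1) - tv n) * ff n I (J + 1) from by
            rw [ff, if_neg hEq],
        map_add, map_mul, map_sub, map_sub, evf_xv n w (by omega) (by omega),
        evf_xv n w (by omega) (by omega), evf_tv]
      have h1 : evf n w (ff n I (J + 1)) = Sv n w I (J + 1) := IH (J + 1) (by omega) hlt (by omega)
      have h2 : evf n w (ff n I J) = Sv n w I J := by
        rcases Nat.eq_zero_or_pos J with hJ0 | hJ1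
        · subst hJ0; rw [ff_zero, map_zero, Sv_zeroj]
        · exact IH J hJ1 (by omega) (by omega)
      rw [h1, h2]
      obtain ⟨im, rfl⟩ : ∃ im, I = im + 1 := ⟨I - 1, by omega⟩
      rw [key n w im J (by omega) (by omega)]
      ring


/-- For a permutation `w` of `{1,…,n}` (modelled as `w : Equiv.Perm ℕ` fixing every point
outside `{1,…,n}`) and `i ≥ j` in `{1,…,n}`, in `ℚ[t]`:
`f_{i,j}(w) = Σ_{k=j}^{i} (−1)^{i−k}·e_{i−k}(w(j+1),…,w(i))·t^{i−k}·b_{k,j}((w(1)−1)t,…,(w(j)−1)t,t)`. -/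
theorem stmt7 (n : ℕ) (w : Equiv.Perm ℕ) (hw : ∀ r, r ∉ Finset.Icc 1 n → w r = r)
    (i j : ℕ) (hj : 1 ≤ j) (hji : j ≤ i) (hin : i ≤ n) :
    evf n ⇑w (ff n i j) =
      ∑ k ∈ Finset.Icc j i,
        (-1 : Polynomial ℚ) ^ (i - k) *
          Polynomial.C (esym (Finset.Icc (j + 1) i) ⇑w (i - k)) *
          Polynomial.X ^ (i - k) * evb n ⇑w (bb n k j) := by
  rw [main_ind n ⇑w i j hj hji hin, Sv]
  exact Finset.sum_congr rfl fun k _ => rfl
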